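/- A priori L² bound for the implicit midpoint step: suppose ũ^{n+1} ∈ H¹₀(0,1) solves i(ũ^{n+1}−ũ^{n})/τ + Δũ^{n+1/2} + θ|x|²ũ^{n+1/2} + λ|ũ^{n+1/2}|^{2σ}ũ^{n+1/2} = ξ^n, where ũ^{n+1/2} = (ũ^n+ũ^{n+1})/2 and ξ^n ∈ L²(0,1). Then for 0 < τ < 2, ‖ũ^{n+1}‖²_{L²} ≤ ((2+τ)/(2−τ))‖ũ^{n}‖²_{L²} + (2τ/(2−τ))‖ξ^n‖²_{L²}. -/

import Mathlib

open MeasureTheory intervalIntegral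

/-- A priori `L²` bound for one implicit midpoint step of the stochastic NLS
with quadratic potential: if `ũⁿ⁺¹` solves the midpoint equation with datum
`ũⁿ` and source `ξⁿ`, then for `0 < τ < 2`,
`‖ũⁿ⁺¹‖² ≤ (2+τ)/(2-τ) ‖ũⁿ‖² + 2τ/(2-τ) ‖ξⁿ‖²`. -/
private lemma key_complex (a b c D m : ℂ) (r τ : ℝ) (hτ : τ ≠ 0)
    (hm : m = (a + b)/2)
    (h : Complex.I * ((b - a)/(τ:ℂ)) + D + (r:ℂ) * m = c) :
    ‖b‖^2 - ‖a‖^2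
      = 2*τ*((c * (starRingEnd ℂ) m).im) - 2*τ*((D * (starRingEnd ℂ) m).im) := by
  have hτc : (τ:ℂ) ≠ 0 := by exact_mod_cast hτ
  have h2 : Complex.I * (b - a) + (τ:ℂ) * D + (τ:ℂ) * (r:ℂ) * m = (τ:ℂ) * c := by
    field_simp at h
    linear_combination h
  have h2re := congrArg Complex.re h2
  have h2im := congrArg Complex.im h2
  have hmre := congrArg Complex.re hm
  have hmim := congrArg Complex.im hm
  simp only [Complex.mul_re, Complex.mul_im, Complex.add_re, Complex.add_im,
    Complex.sub_re, Complex.sub_im, Complex.I_re, Complex.I_im, Complex.ofReal_re,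
    Complex.ofReal_im, Complex.div_ofNat_re, Complex.div_ofNat_im] at h2re h2im hmre hmim
  have hb : ‖b‖^2 = b.re^2 + b.im^2 := by
    rw [Complex.sq_norm, Complex.normSq_apply]; ring
  have ha : ‖a‖^2 = a.re^2 + a.im^2 := by
    rw [Complex.sq_norm, Complex.normSq_apply]; ring
  simp only [Complex.mul_im, Complex.conj_re, Complex.conj_im]
  rw [hmre, hmim] at h2re h2im
  rw [hb, ha, hmre, hmim]
  linear_combination (a.re+b.re)*h2im - (a.im+b.im)*h2re

theorem midpoint_L2_apriori
    (θ lam σ τ : ℝ) (hσ : 0 < σ) (hτ0 : 0 < τ) (hτ2 : τ < 2)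
    (u0 u1 ξ : ℝ → ℂ)
    (hu0 : ContDiff ℝ 2 u0) (hu1 : ContDiff ℝ 2 u1) (hξ : Continuous ξ)
    (hbc00 : u0 0 = 0) (hbc01 : u0 1 = 0) (hbc10 : u1 0 = 0) (hbc11 : u1 1 = 0)
    (heq : ∀ x ∈ Set.Ioo (0:ℝ) 1,
      Complex.I * ((u1 x - u0 x) / (τ : ℂ))
        + deriv (deriv (fun y => (u0 y + u1 y)/2)) x
        + (θ : ℂ) * (x : ℂ) ^ 2 * ((u0 x + u1 x)/2)
        + (lam : ℂ) * ((‖(u0 x + u1 x)/2‖ ^ (2*σ) : ℝ) : ℂ) * ((u0 x + u1 x)/2)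
      = ξ x) :
    (∫ x in (0:ℝ)..1, ‖u1 x‖ ^ 2)
      ≤ ((2 + τ)/(2 - τ)) * (∫ x in (0:ℝ)..1, ‖u0 x‖ ^ 2)
        + (2*τ/(2 - τ)) * (∫ x in (0:ℝ)..1, ‖ξ x‖ ^ 2) := by
  set v : ℝ → ℂ := fun y => (u0 y + u1 y)/2 with hvdef
  have hv : ContDiff ℝ 2 v := (hu0.add hu1).div_const 2
  have hvC : Continuous v := hv.continuous
  have hdv : ContDiff ℝ 1 (deriv v) := by
    have h12 : ((2:ℕ) : WithTop ℕ∞) = 1 + 1 := by norm_num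
    exact (contDiff_succ_iff_deriv.mp (h12 ▸ hv)).2.2
  have hdvC : Continuous (deriv v) := hv.continuous_deriv (by norm_num)
  have hddvC : Continuous (deriv (deriv v)) := hdv.continuous_deriv le_rfl
  have hvd : ∀ x, HasDerivAt v (deriv v x) x :=
    fun x => ((hv.differentiable (by norm_num)) x).hasDerivAt
  have hdvd : ∀ x, HasDerivAt (deriv v) (deriv (deriv v) x) x :=
    fun x => ((hdv.differentiable one_ne_zero) x).hasDerivAt
  have hv0 : v 0 = 0 := by simp [hvdef, hbc00, hbc10]
  have hv1 : v 1 = 0 := by simp [hvdef, hbc01, hbc11]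
  -- integration by parts
  have hibp : (∫ x in (0:ℝ)..1,
        (deriv (deriv v) x * (starRingEnd ℂ) (v x)
          + deriv v x * (starRingEnd ℂ) (deriv v x)))
      = deriv v 1 * (starRingEnd ℂ) (v 1) - deriv v 0 * (starRingEnd ℂ) (v 0) := by
    apply intervalIntegral.integral_deriv_mul_eq_sub_of_hasDerivAt
    · exact hdvC.continuousOn
    · exact (Complex.continuous_conj.comp hvC).continuousOn
    · exact fun x _ => hdvd x
    · intro x _
      exact (hvd x).star
    · exact hddvC.intervalIntegrable 0 1
    · exact (Complex.continuous_conj.comp hdvC).intervalIntegrable 0 1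
  have hJ : (∫ x in (0:ℝ)..1, (deriv (deriv v) x * (starRingEnd ℂ) (v x)).im) = 0 := by
    have h1 : ∀ x : ℝ, (deriv (deriv v) x * (starRingEnd ℂ) (v x)).im
        = Complex.imCLM (deriv (deriv v) x * (starRingEnd ℂ) (v x)
            + deriv v x * (starRingEnd ℂ) (deriv v x)) := by
      intro x
      rw [Complex.imCLM_apply, Complex.add_im, Complex.mul_conj]
      simp
    have hcv : Continuous (fun x => (starRingEnd ℂ) (v x)) := Complex.continuous_conj.comp hvC
    have hcdv : Continuous (fun x => (starRingEnd ℂ) (deriv v x)) :=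
      Complex.continuous_conj.comp hdvC
    have hintg : IntervalIntegrable (fun x => deriv (deriv v) x * (starRingEnd ℂ) (v x)
        + deriv v x * (starRingEnd ℂ) (deriv v x)) volume 0 1 :=
      ((hddvC.mul hcv).add (hdvC.mul hcdv)).intervalIntegrable 0 1
    simp_rw [h1]
    rw [ContinuousLinearMap.intervalIntegral_comp_comm _ hintg]
    rw [hibp, hv0, hv1]
    simp
  -- pointwise identity
  have hpoint : ∀ x ∈ Set.Ioo (0:ℝ) 1,
      ‖u1 x‖^2 - ‖u0 x‖^2
        = 2*τ*((ξ x * (starRingEnd ℂ) (v x)).im)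
          - 2*τ*((deriv (deriv v) x * (starRingEnd ℂ) (v x)).im) := by
    intro x hx
    refine key_complex (u0 x) (u1 x) (ξ x) (deriv (deriv v) x) (v x)
      (θ * x^2 + lam * ‖(u0 x + u1 x)/2‖ ^ (2*σ)) τ (ne_of_gt hτ0) (by simp [hvdef]) ?_
    have h := heq x hx
    simp only [hvdef]
    push_cast
    linear_combination h
  -- integrability of the squares
  have hi0 : IntervalIntegrable (fun x => ‖u0 x‖^2) volume 0 1 :=
    ((hu0.continuous.norm).pow 2).intervalIntegrable 0 1
  have hi1 : IntervalIntegrable (fun x => ‖u1 x‖^2) volume 0 1 :=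
    ((hu1.continuous.norm).pow 2).intervalIntegrable 0 1
  have hiξ : IntervalIntegrable (fun x => ‖ξ x‖^2) volume 0 1 :=
    ((hξ.norm).pow 2).intervalIntegrable 0 1
  have hiS : IntervalIntegrable (fun x => (ξ x * (starRingEnd ℂ) (v x)).im) volume 0 1 :=
    (Complex.continuous_im.comp (hξ.mul (Complex.continuous_conj.comp hvC))).intervalIntegrable 0 1
  have hiJ : IntervalIntegrable
      (fun x => (deriv (deriv v) x * (starRingEnd ℂ) (v x)).im) volume 0 1 :=
    (Complex.continuous_im.comp (hddvC.mul (Complex.continuous_conj.comp hvC))).intervalIntegrable 0 1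
  -- integrate the pointwise identity
  have hint : (∫ x in (0:ℝ)..1, (‖u1 x‖^2 - ‖u0 x‖^2))
      = ∫ x in (0:ℝ)..1,
          (2*τ*((ξ x * (starRingEnd ℂ) (v x)).im)
            - 2*τ*((deriv (deriv v) x * (starRingEnd ℂ) (v x)).im)) := by
    apply intervalIntegral.integral_congr_ae
    have h1 : ∀ᵐ x : ℝ, x ≠ (1:ℝ) := by
      rw [MeasureTheory.ae_iff]
      have : {x : ℝ | ¬ x ≠ 1} = {1} := by ext y; simp
      rw [this]
      exact Real.volume_singleton
    filter_upwards [h1] with x hx hxm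
    rw [Set.uIoc_of_le (by norm_num : (0:ℝ) ≤ 1)] at hxm
    exact hpoint x ⟨hxm.1, lt_of_le_of_ne hxm.2 hx⟩
  have hAB : (∫ x in (0:ℝ)..1, ‖u1 x‖^2) - (∫ x in (0:ℝ)..1, ‖u0 x‖^2)
      = 2*τ * (∫ x in (0:ℝ)..1, (ξ x * (starRingEnd ℂ) (v x)).im) := by
    rw [← intervalIntegral.integral_sub hi1 hi0, hint,
      intervalIntegral.integral_sub (hiS.const_mul _) (hiJ.const_mul _),
      intervalIntegral.integral_const_mul, intervalIntegral.integral_const_mul, hJ]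
    ring
  -- pointwise bound
  have hbd : ∀ x : ℝ, (ξ x * (starRingEnd ℂ) (v x)).im
      ≤ ‖ξ x‖^2/2 + ‖u0 x‖^2/4 + ‖u1 x‖^2/4 := by
    intro x
    have h1 : (ξ x * (starRingEnd ℂ) (v x)).im ≤ ‖ξ x‖ * ‖v x‖ := by
      calc (ξ x * (starRingEnd ℂ) (v x)).im
          ≤ ‖ξ x * (starRingEnd ℂ) (v x)‖ :=
            (le_abs_self _).trans (Complex.abs_im_le_norm _)
        _ = ‖ξ x‖ * ‖v x‖ := by
            rw [norm_mul, Complex.norm_conj]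
    have h2 : ‖v x‖ ≤ (‖u0 x‖ + ‖u1 x‖)/2 := by
      simp only [hvdef]
      calc ‖(u0 x + u1 x)/2‖ = ‖u0 x + u1 x‖/2 := by
            rw [norm_div]; norm_num
        _ ≤ (‖u0 x‖ + ‖u1 x‖)/2 := by
            have := norm_add_le (u0 x) (u1 x); linarith
    nlinarith [norm_nonneg (ξ x), norm_nonneg (v x), norm_nonneg (u0 x), norm_nonneg (u1 x),
      sq_nonneg (‖ξ x‖ - ‖v x‖), sq_nonneg (‖u0 x‖ - ‖u1 x‖)]
  have hS : (∫ x in (0:ℝ)..1, (ξ x * (starRingEnd ℂ) (v x)).im)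
      ≤ (∫ x in (0:ℝ)..1, ‖ξ x‖^2)/2 + (∫ x in (0:ℝ)..1, ‖u0 x‖^2)/4
        + (∫ x in (0:ℝ)..1, ‖u1 x‖^2)/4 := by
    have hmono := intervalIntegral.integral_mono_on (by norm_num : (0:ℝ) ≤ 1) hiS
      (((hiξ.div_const 2).add (hi0.div_const 4)).add (hi1.div_const 4))
      (fun x _ => hbd x)
    rw [intervalIntegral.integral_add ((hiξ.div_const 2).add (hi0.div_const 4)) (hi1.div_const 4),
      intervalIntegral.integral_add (hiξ.div_const 2) (hi0.div_const 4),
      intervalIntegral.integral_div, intervalIntegral.integral_div,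
      intervalIntegral.integral_div] at hmono
    exact hmono
  -- conclusion
  set A := (∫ x in (0:ℝ)..1, ‖u1 x‖^2)
  set B := (∫ x in (0:ℝ)..1, ‖u0 x‖^2)
  set X := (∫ x in (0:ℝ)..1, ‖ξ x‖^2)
  have h2τ : (0:ℝ) < 2 - τ := by linarith
  rw [div_mul_eq_mul_div, div_mul_eq_mul_div, ← add_div, le_div_iff₀ h2τ]
  nlinarith [mul_le_mul_of_nonneg_left hS (by positivity : (0:ℝ) ≤ 2*τ)]
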